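/- Let H and H′ be n×n real symmetric positive definite matrices, γ₁ > 0, and suppose H′ ≥ γ₁ H in the Loewner order. Let e, ν ∈ ℝⁿ and define e⁺ = γ₁ (H′)⁻¹ H (e + ν). Then e⁺ᵀ H′ e⁺ ≤ 2γ₁ (eᵀ H e + νᵀ H ν). -/

import Mathlib

open Matrix

lemma dot_cs (n : ℕ) (u v : Fin n → ℝ) : (u ⬝ᵥ v)^2 ≤ (u ⬝ᵥ u) * (v ⬝ᵥ v) := by
  simpa [dotProduct, sq] using Finset.sum_mul_sq_le_sq_mul_sq Finset.univ u v

lemma psd_cs (n : ℕ) (M : Matrix (Fin n) (Fin n) ℝ) (hM : M.PosSemidef)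
    (x y : Fin n → ℝ) :
    (x ⬝ᵥ M *ᵥ y)^2 ≤ (x ⬝ᵥ M *ᵥ x) * (y ⬝ᵥ M *ᵥ y) := by
  obtain ⟨S, hSt, hSS⟩ : ∃ S : Matrix (Fin n) (Fin n) ℝ, Sᵀ = S ∧ S * S = M :=
    open scoped MatrixOrder in
    ⟨CFC.sqrt M, (CFC.sqrt_nonneg M).posSemidef.isHermitian.eq, CFC.sqrt_mul_sqrt_self M hM.nonneg⟩
  have key : ∀ a b : Fin n → ℝ, a ⬝ᵥ M *ᵥ b = (S *ᵥ a) ⬝ᵥ (S *ᵥ b) := by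
    intro a b
    rw [← hSS, ← mulVec_mulVec, dotProduct_mulVec, ← mulVec_transpose, hSt]
  rw [key x y, key x x, key y y]
  exact dot_cs n _ _

theorem lyapunov_decrement_non_impulsive (n : ℕ) (H H' : Matrix (Fin n) (Fin n) ℝ)
    (hH : H.PosDef) (hH' : H'.PosDef) (γ₁ : ℝ) (hγ₁ : 0 < γ₁)
    (hLoewner : (H' - γ₁ • H).PosSemidef)
    (e ν : Fin n → ℝ) (eplus : Fin n → ℝ)
    (heplus : eplus = γ₁ • ((H')⁻¹ * H) *ᵥ (e + ν)) :
    eplus ⬝ᵥ H' *ᵥ eplus ≤ 2 * γ₁ * (e ⬝ᵥ H *ᵥ e + ν ⬝ᵥ H *ᵥ ν) := by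
  set x : Fin n → ℝ := e + ν with hx
  set y : Fin n → ℝ := (H')⁻¹ *ᵥ (H *ᵥ x) with hy
  have hinv : H' * (H')⁻¹ = 1 := Matrix.mul_nonsing_inv H' (isUnit_iff_ne_zero.mpr hH'.det_pos.ne')
  have hHy : H' *ᵥ y = H *ᵥ x := by
    rw [hy, mulVec_mulVec, hinv, one_mulVec]
  have heq : eplus = γ₁ • y := by
    rw [heplus, ← mulVec_mulVec]
  set a : ℝ := y ⬝ᵥ H' *ᵥ y with hadef
  set b : ℝ := x ⬝ᵥ H *ᵥ x with hbdef
  set c : ℝ := y ⬝ᵥ H *ᵥ y with hcdef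
  have ha0 : 0 ≤ a := by simpa using hH'.posSemidef.dotProduct_mulVec_nonneg y
  have hb0 : 0 ≤ b := by simpa using hH.posSemidef.dotProduct_mulVec_nonneg x
  have hc0 : 0 ≤ c := by simpa using hH.posSemidef.dotProduct_mulVec_nonneg y
  have hgc : γ₁ * c ≤ a := by
    have := hLoewner.dotProduct_mulVec_nonneg y
    simp only [sub_mulVec, dotProduct_sub, smul_mulVec, dotProduct_smul,
      RCLike.star_def, star_trivial, smul_eq_mul] at this
    simp only [hadef, hcdef, smul_eq_mul]
    linarith [this]
  have hay : a = y ⬝ᵥ H *ᵥ x := by rw [hadef, hHy]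
  have hcs : a ^ 2 ≤ c * b := by
    rw [hay]
    exact psd_cs n H hH.posSemidef y x
  have hab : γ₁ * a ≤ b := by
    rcases ha0.eq_or_lt with h | h
    · nlinarith
    · nlinarith
  have hLHS : eplus ⬝ᵥ H' *ᵥ eplus = γ₁ * (γ₁ * a) := by
    rw [heq, smul_dotProduct, mulVec_smul, dotProduct_smul, smul_eq_mul, smul_eq_mul]
  have hbb : b ≤ 2 * (e ⬝ᵥ H *ᵥ e + ν ⬝ᵥ H *ᵥ ν) := by
    have hnn : 0 ≤ (e - ν) ⬝ᵥ H *ᵥ (e - ν) := by simpa using hH.posSemidef.dotProduct_mulVec_nonneg (e - ν)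
    have hexp1 : b = e ⬝ᵥ H *ᵥ e + e ⬝ᵥ H *ᵥ ν + ν ⬝ᵥ H *ᵥ e + ν ⬝ᵥ H *ᵥ ν := by
      simp [hbdef, hx, mulVec_add, dotProduct_add, add_dotProduct]
      ring
    have hexp2 : (e - ν) ⬝ᵥ H *ᵥ (e - ν)
        = e ⬝ᵥ H *ᵥ e - e ⬝ᵥ H *ᵥ ν - ν ⬝ᵥ H *ᵥ e + ν ⬝ᵥ H *ᵥ ν := by
      simp [mulVec_sub, dotProduct_sub, sub_dotProduct]
      ring
    linarith [hnn, hexp1.ge, hexp2 ▸ hnn]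
  calc eplus ⬝ᵥ H' *ᵥ eplus = γ₁ * (γ₁ * a) := hLHS
    _ ≤ γ₁ * b := by nlinarith
    _ ≤ 2 * γ₁ * (e ⬝ᵥ H *ᵥ e + ν ⬝ᵥ H *ᵥ ν) := by nlinarith
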